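/- Let Ψ₀,Ψ₁,Ψ₂,Ψ₃,Ψ₄ ∈ ℂ satisfy the Euclidean-signature reality conditions Ψ₄ = conj(Ψ₀), Ψ₃ = conj(Ψ₁), Ψ₂ = conj(Ψ₂) (i.e. Ψ₂ is real). If z₁ ∈ ℂ, z₁ ≠ 0, is a root of the quartic Ψ₄z⁴ − 4Ψ₃z³ + 6Ψ₂z² + 4Ψ₁z + Ψ₀ = 0, then z₂ = −1/conj(z₁) is also a root. -/

import Mathlib

/-!
STATEMENT 6: Euclidean reality conditions Ψ₄ = conj Ψ₀, Ψ₃ = conj Ψ₁, Ψ₂ real.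
If z₁ ≠ 0 is a root of Ψ₄z⁴ − 4Ψ₃z³ + 6Ψ₂z² + 4Ψ₁z + Ψ₀ = 0, then so is
z₂ = −1/conj z₁.
-/

open scoped ComplexConjugate

theorem euclidean_roots_pair_up
    (Ψ₀ Ψ₁ Ψ₂ Ψ₃ Ψ₄ : ℂ)
    (h4 : Ψ₄ = conj Ψ₀) (h3 : Ψ₃ = conj Ψ₁) (h2 : Ψ₂ = conj Ψ₂)
    (z₁ : ℂ) (hz : z₁ ≠ 0)
    (hroot : Ψ₄ * z₁ ^ 4 - 4 * Ψ₃ * z₁ ^ 3 + 6 * Ψ₂ * z₁ ^ 2 + 4 * Ψ₁ * z₁ + Ψ₀ = 0) :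
    Ψ₄ * (-1 / conj z₁) ^ 4 - 4 * Ψ₃ * (-1 / conj z₁) ^ 3 +
      6 * Ψ₂ * (-1 / conj z₁) ^ 2 + 4 * Ψ₁ * (-1 / conj z₁) + Ψ₀ = 0 := by
  have hw : conj z₁ ≠ 0 := by simpa using hz
  rw [h4, h3] at hroot ⊢
  have h := congrArg conj hroot
  simp only [map_add, map_sub, map_mul, map_pow, map_ofNat, map_zero,
    Complex.conj_conj] at h
  rw [← h2] at h
  have H : ((starRingEnd ℂ) Ψ₀ * (-1 / conj z₁) ^ 4 - 4 * (starRingEnd ℂ) Ψ₁ * (-1 / conj z₁) ^ 3 +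
      6 * Ψ₂ * (-1 / conj z₁) ^ 2 + 4 * Ψ₁ * (-1 / conj z₁) + Ψ₀) * (conj z₁) ^ 4 = 0 := by
    have h10 : ((conj z₁)⁻¹ * conj z₁) ^ 10 = 1 := by
      rw [inv_mul_cancel₀ hw]; norm_num
    field_simp
    linear_combination h
  exact (mul_eq_zero.mp H).resolve_right (pow_ne_zero 4 hw)
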